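/- arXiv:0805.2707 — 7 statements merged into one kernel-verified Lean document; each statement's English description precedes it below -/
import Mathlib

section
/- For a real number x with 1 - x - x² ≠ 0 and positive integers n, m, the following recurrence holds: ∑_{r=1}^{n} r^m F_r x^r = (1/(1 - x - x²)) ∑_{i=1}^{m} C(m,i) (-1)^{i+1} ∑_{r=1}^{n} r^{m-i} F_r x^r + (x²/(1 - x - x²)) ∑_{i=1}^{m} C(m,i) ∑_{r=1}^{n-1} r^{m-i} F_r x^r - n^m (F_{n+1} x^{n+1} + F_n x^{n+2}) / (1 - x - x²). -/
open Finset

lemma binom_aux (m : ℕ) (y z : ℝ) :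
    ∑ i ∈ Icc 1 m, (m.choose i : ℝ) * z ^ i * y ^ (m - i) = (z + y) ^ m - y ^ m := by
  rw [add_pow]
  rw [Finset.sum_range_succ' (fun k => z ^ k * y ^ (m - k) * (m.choose k : ℝ)) m]
  rw [show Icc 1 m = Ico 1 (m+1) from (Finset.Ico_add_one_right_eq_Icc 1 m).symm,
    Finset.sum_Ico_eq_sum_range]
  simp only [pow_zero, one_mul, Nat.choose_zero_right, Nat.cast_one, mul_one, Nat.sub_zero]
  rw [add_sub_cancel_right]
  apply Finset.sum_congr (by norm_num)
  intro i _
  rw [show 1 + i = i + 1 from by omega]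
  ring_nf

lemma key_aux (m : ℕ) (hm : 1 ≤ m) (x : ℝ) : ∀ n : ℕ,
    (x + x ^ 2) * ∑ r ∈ Icc 1 (n+1), (r : ℝ) ^ m * (Nat.fib r : ℝ) * x ^ r =
      ∑ r ∈ Icc 1 (n+1), ((r : ℝ) - 1) ^ m * (Nat.fib r : ℝ) * x ^ r
      - x ^ 2 * ∑ r ∈ Icc 1 n, (((r : ℝ) + 1) ^ m - (r : ℝ) ^ m) * (Nat.fib r : ℝ) * x ^ r
      + ((n : ℝ) + 1) ^ m *
          ((Nat.fib (n + 2) : ℝ) * x ^ (n + 2) + (Nat.fib (n + 1) : ℝ) * x ^ (n + 3)) := by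
  intro n
  induction n with
  | zero =>
      simp [Nat.fib_one, Nat.fib_two, zero_pow (by omega : m ≠ 0)]
      ring
  | succ n ih =>
      rw [Finset.sum_Icc_succ_top (by omega) , mul_add, ih,
        Finset.sum_Icc_succ_top (by omega : 1 ≤ n + 1 + 1),
        Finset.sum_Icc_succ_top (by omega : 1 ≤ n + 1),
        Finset.sum_Icc_succ_top (by omega : 1 ≤ n + 1)]
      push_cast [show Nat.fib (n+1+2) = Nat.fib (n+1) + Nat.fib (n+2) from Nat.fib_add_two]
      ring

theorem stmt_2 (n m : ℕ) (hn : 1 ≤ n) (hm : 1 ≤ m) (x : ℝ)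
    (hx : 1 - x - x ^ 2 ≠ 0) :
    ∑ r ∈ Finset.Icc 1 n, (r : ℝ) ^ m * (Nat.fib r : ℝ) * x ^ r =
      (1 / (1 - x - x ^ 2)) *
        ∑ i ∈ Finset.Icc 1 m, (m.choose i : ℝ) * (-1) ^ (i + 1) *
          ∑ r ∈ Finset.Icc 1 n, (r : ℝ) ^ (m - i) * (Nat.fib r : ℝ) * x ^ r
      + (x ^ 2 / (1 - x - x ^ 2)) *
        ∑ i ∈ Finset.Icc 1 m, (m.choose i : ℝ) *
          ∑ r ∈ Finset.Icc 1 (n - 1), (r : ℝ) ^ (m - i) * (Nat.fib r : ℝ) * x ^ r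
      - (n : ℝ) ^ m *
          ((Nat.fib (n + 1) : ℝ) * x ^ (n + 1) + (Nat.fib n : ℝ) * x ^ (n + 2))
          / (1 - x - x ^ 2) := by
  obtain ⟨k, rfl⟩ : ∃ k, n = k + 1 := ⟨n - 1, by omega⟩
  have hkey := key_aux m hm x k
  have hA : ∑ i ∈ Finset.Icc 1 m, (m.choose i : ℝ) * (-1) ^ (i + 1) *
        ∑ r ∈ Finset.Icc 1 (k+1), (r : ℝ) ^ (m - i) * (Nat.fib r : ℝ) * x ^ r
      = (∑ r ∈ Icc 1 (k+1), (r : ℝ) ^ m * (Nat.fib r : ℝ) * x ^ r)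
        - ∑ r ∈ Icc 1 (k+1), ((r : ℝ) - 1) ^ m * (Nat.fib r : ℝ) * x ^ r := by
    simp_rw [Finset.mul_sum]
    rw [Finset.sum_comm, ← Finset.sum_sub_distrib]
    refine Finset.sum_congr rfl fun r _ => ?_
    have h1 : ∀ i ∈ Icc 1 m, (m.choose i : ℝ) * (-1) ^ (i + 1) *
          ((r : ℝ) ^ (m - i) * (Nat.fib r : ℝ) * x ^ r)
        = -(((m.choose i : ℝ) * (-1) ^ i * (r : ℝ) ^ (m - i)) * ((Nat.fib r : ℝ) * x ^ r)) :=
      fun i _ => by ring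
    rw [Finset.sum_congr rfl h1, Finset.sum_neg_distrib, ← Finset.sum_mul,
      binom_aux m (r : ℝ) (-1)]
    ring
  have hB : ∑ i ∈ Finset.Icc 1 m, (m.choose i : ℝ) *
        ∑ r ∈ Finset.Icc 1 (k+1-1), (r : ℝ) ^ (m - i) * (Nat.fib r : ℝ) * x ^ r
      = ∑ r ∈ Icc 1 k, (((r : ℝ) + 1) ^ m - (r : ℝ) ^ m) * (Nat.fib r : ℝ) * x ^ r := by
    simp only [Nat.add_sub_cancel]
    simp_rw [Finset.mul_sum]
    rw [Finset.sum_comm]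
    refine Finset.sum_congr rfl fun r _ => ?_
    have h1 : ∀ i ∈ Icc 1 m, (m.choose i : ℝ) *
          ((r : ℝ) ^ (m - i) * (Nat.fib r : ℝ) * x ^ r)
        = ((m.choose i : ℝ) * (1:ℝ) ^ i * (r : ℝ) ^ (m - i)) * ((Nat.fib r : ℝ) * x ^ r) :=
      fun i _ => by ring
    rw [Finset.sum_congr rfl h1, ← Finset.sum_mul, binom_aux m (r : ℝ) 1]
    ring
  rw [hA, hB]
  push_cast at hkey ⊢
  field_simp
  linear_combination -hkey
end

section
/- For positive integers n and m, ∑_{r=1}^{n} r^m F_r = ∑_{i=1}^{m} C(m,i) (-1)^i ∑_{r=1}^{n} r^{m-i} F_r - ∑_{i=1}^{m} C(m,i) ∑_{r=1}^{n-1} r^{m-i} F_r + n^m F_{n+2}. -/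
open Finset

lemma binomA (x : ℤ) (m : ℕ) :
    ∑ i ∈ Finset.Icc 1 m, (m.choose i : ℤ) * (-1) ^ i * x ^ (m - i)
      = (x - 1) ^ m - x ^ m := by
  have h := add_pow (-1 : ℤ) x m
  rw [show (-1 : ℤ) + x = x - 1 by ring] at h
  rw [Finset.range_eq_Ico, Finset.sum_eq_sum_Ico_succ_bot (Nat.succ_pos m)
    (fun i => ((-1:ℤ)^i * x ^ (m - i) * (m.choose i : ℤ)))] at h
  rw [← Finset.Ico_add_one_right_eq_Icc]
  simp only [pow_zero, Nat.sub_zero, Nat.choose_zero_right, Nat.cast_one, mul_one, one_mul] at h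
  have : ∑ i ∈ Finset.Ico 1 (m+1), (m.choose i : ℤ) * (-1) ^ i * x ^ (m - i)
      = ∑ i ∈ Finset.Ico 1 (m+1), (-1:ℤ)^i * x ^ (m - i) * (m.choose i : ℤ) := by
    apply Finset.sum_congr rfl; intro i _; ring
  rw [this]; linarith [h]

lemma binomB (x : ℤ) (m : ℕ) :
    ∑ i ∈ Finset.Icc 1 m, (m.choose i : ℤ) * x ^ (m - i)
      = (x + 1) ^ m - x ^ m := by
  have h := add_pow (1 : ℤ) x m
  rw [show (1 : ℤ) + x = x + 1 by ring] at h
  rw [Finset.range_eq_Ico, Finset.sum_eq_sum_Ico_succ_bot (Nat.succ_pos m)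
    (fun i => ((1:ℤ)^i * x ^ (m - i) * (m.choose i : ℤ)))] at h
  rw [← Finset.Ico_add_one_right_eq_Icc]
  simp only [pow_zero, one_pow, Nat.sub_zero, Nat.choose_zero_right, Nat.cast_one, mul_one,
    one_mul] at h
  have : ∑ i ∈ Finset.Ico 1 (m+1), (m.choose i : ℤ) * x ^ (m - i)
      = ∑ i ∈ Finset.Ico 1 (m+1), x ^ (m - i) * (m.choose i : ℤ) := by
    apply Finset.sum_congr rfl; intro i _; ring
  rw [this]; linarith [h]

lemma tele (m : ℕ) (hm : 1 ≤ m) : ∀ n : ℕ, 1 ≤ n →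
    ∑ r ∈ Finset.Icc 1 n, (((r : ℤ) - 1) ^ m - (r : ℤ) ^ m) * (Nat.fib r : ℤ)
      - ∑ r ∈ Finset.Icc 1 (n - 1), (((r : ℤ) + 1) ^ m - (r : ℤ) ^ m) * (Nat.fib r : ℤ)
      + (n : ℤ) ^ m * (Nat.fib (n + 2) : ℤ)
      = ∑ r ∈ Finset.Icc 1 n, (r : ℤ) ^ m * (Nat.fib r : ℤ) := by
  intro n
  induction n with
  | zero => intro h; omega
  | succ n ih =>
    intro _
    rcases Nat.eq_zero_or_pos n with h0 | hpos
    · subst h0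
      simp [Finset.Icc_self, zero_pow (by omega : m ≠ 0), Nat.fib_one]
      norm_num [Nat.fib]
    · have ih' := ih hpos
      rw [Finset.sum_Icc_succ_top (by omega : 1 ≤ n + 1)]
      have hn1 : (n + 1) - 1 = (n - 1) + 1 := by omega
      rw [hn1, Finset.sum_Icc_succ_top (by omega : 1 ≤ (n:ℕ) - 1 + 1),
        show (n:ℕ) - 1 + 1 = n by omega]
      rw [Finset.sum_Icc_succ_top (by omega : 1 ≤ n + 1)]
      have hf3 : (Nat.fib (n + 1 + 2) : ℤ) = Nat.fib (n + 2) + Nat.fib (n + 1) := by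
        rw [show n + 1 + 2 = (n + 1) + 2 from rfl, Nat.fib_add_two]; push_cast; ring
      have hf2 : (Nat.fib (n + 2) : ℤ) = Nat.fib (n + 1) + Nat.fib n := by
        rw [Nat.fib_add_two]; push_cast; ring
      push_cast
      rw [show ((n:ℤ) + 1 - 1) = (n:ℤ) by ring]
      linear_combination ih' + ((n:ℤ)+1)^m * hf3 + (((n:ℤ)+1)^m - (n:ℤ)^m) * hf2

theorem stmt_3 (n m : ℕ) (hn : 1 ≤ n) (hm : 1 ≤ m) :
    ∑ r ∈ Finset.Icc 1 n, (r : ℤ) ^ m * (Nat.fib r : ℤ) =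
      ∑ i ∈ Finset.Icc 1 m, (m.choose i : ℤ) * (-1) ^ i *
          ∑ r ∈ Finset.Icc 1 n, (r : ℤ) ^ (m - i) * (Nat.fib r : ℤ)
      - ∑ i ∈ Finset.Icc 1 m, (m.choose i : ℤ) *
          ∑ r ∈ Finset.Icc 1 (n - 1), (r : ℤ) ^ (m - i) * (Nat.fib r : ℤ)
      + (n : ℤ) ^ m * (Nat.fib (n + 2) : ℤ) := by
  have h1 : ∑ i ∈ Finset.Icc 1 m, (m.choose i : ℤ) * (-1) ^ i *
        ∑ r ∈ Finset.Icc 1 n, (r : ℤ) ^ (m - i) * (Nat.fib r : ℤ)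
      = ∑ r ∈ Finset.Icc 1 n, (((r : ℤ) - 1) ^ m - (r : ℤ) ^ m) * (Nat.fib r : ℤ) := by
    simp_rw [Finset.mul_sum]
    rw [Finset.sum_comm]
    apply Finset.sum_congr rfl
    intro r _
    rw [← binomA (r : ℤ) m, Finset.sum_mul]
    apply Finset.sum_congr rfl
    intro i _; ring
  have h2 : ∑ i ∈ Finset.Icc 1 m, (m.choose i : ℤ) *
        ∑ r ∈ Finset.Icc 1 (n - 1), (r : ℤ) ^ (m - i) * (Nat.fib r : ℤ)
      = ∑ r ∈ Finset.Icc 1 (n - 1), (((r : ℤ) + 1) ^ m - (r : ℤ) ^ m) * (Nat.fib r : ℤ) := by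
    simp_rw [Finset.mul_sum]
    rw [Finset.sum_comm]
    apply Finset.sum_congr rfl
    intro r _
    rw [← binomB (r : ℤ) m, Finset.sum_mul]
    apply Finset.sum_congr rfl
    intro i _; ring
  rw [h1, h2, tele m hm n hn]
end

section
/- For every positive integer n, ∑_{r=1}^{n} r² F_r = (n² + 2) F_{n+2} - (2n - 3) F_{n+3} - 8. -/
theorem stmt_5 (n : ℕ) (hn : 1 ≤ n) :
    ∑ r ∈ Finset.Icc 1 n, (r : ℤ) ^ 2 * (Nat.fib r : ℤ) =
      ((n : ℤ) ^ 2 + 2) * (Nat.fib (n + 2) : ℤ)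
        - (2 * (n : ℤ) - 3) * (Nat.fib (n + 3) : ℤ) - 8 := by
  induction n with
  | zero => omega
  | succ m ih =>
    rcases Nat.eq_or_lt_of_le hn with h | h
    · simp [← h]; decide
    · have hm : 1 ≤ m := by omega
      rw [Finset.sum_Icc_succ_top (by omega), ih hm]
      have h2 : Nat.fib (m + 3) = Nat.fib (m + 1) + Nat.fib (m + 2) := Nat.fib_add_two
      have h3 : Nat.fib (m + 4) = Nat.fib (m + 2) + Nat.fib (m + 3) := Nat.fib_add_two
      push_cast [h2, h3]
      ring
end

section
/- For every integer n ≥ 2, ∑_{r=1}^{n} (-1)^r r F_r = (-1)^n (n+1) F_{n-1} + (-1)^{n-1} F_{n-2} - 2. -/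
theorem stmt_8 (n : ℕ) (hn : 2 ≤ n) :
    ∑ r ∈ Finset.Icc 1 n, (-1 : ℤ) ^ r * (r : ℤ) * (Nat.fib r : ℤ) =
      (-1) ^ n * ((n : ℤ) + 1) * (Nat.fib (n - 1) : ℤ)
        + (-1) ^ (n - 1) * (Nat.fib (n - 2) : ℤ) - 2 := by
  induction n, hn using Nat.le_induction with
  | base => decide
  | succ n hn ih =>
    rw [Finset.sum_Icc_succ_top (by omega), ih]
    have h1 : n + 1 - 1 = n := by omega
    have h2 : n + 1 - 2 = n - 1 := by omega
    have h3 : n - 1 + 1 = n := by omega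
    have h4 : n - 2 + 1 = n - 1 := by omega
    rw [h1, h2]
    have hf : (Nat.fib n : ℤ) = Nat.fib (n - 1) + Nat.fib (n - 2) := by
      have hn2 : n - 2 + 2 = n := by omega
      have h := Nat.fib_add_two (n := n - 2)
      rw [h4, hn2] at h
      omega
    have hf2 : (Nat.fib (n + 1) : ℤ) = Nat.fib n + Nat.fib (n - 1) := by
      have hn2 : n - 1 + 2 = n + 1 := by omega
      have h := Nat.fib_add_two (n := n - 1)
      rw [h3, hn2] at h
      omega
    have he2 : ((-1 : ℤ)) ^ (n - 1) = -(-1) ^ n := by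
      have : ((-1 : ℤ)) ^ (n - 1) * (-1) = (-1) ^ n := by rw [← pow_succ, h3]
      linarith
    rw [he2, pow_succ, hf2, hf]
    push_cast
    ring
end

section
/- For every integer n ≥ 1 and m ≥ 1, ∑_{r=1}^{n} (-1)^r r^m F_r = ∑_{i=1}^{m} C(m,i) (-1)^{i+1} ∑_{r=1}^{n} (-1)^r r^{m-i} F_r + ∑_{i=1}^{m} C(m,i) ∑_{r=1}^{n-1} (-1)^r r^{m-i} F_r - n^m [(-1)^{n+1} F_{n+1} + (-1)^{n+2} F_n]. -/
open Finset

private lemma stmt9_R1 (x : ℤ) (m : ℕ) :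
    ∑ i ∈ range (m+1), (m.choose i : ℤ) * (-1)^i * x^(m-i) = (x-1)^m := by
  rw [sub_eq_add_neg, add_pow, ← Finset.sum_range_reflect]
  refine Finset.sum_congr rfl fun i hi => ?_
  simp only [Finset.mem_range] at hi
  rw [show m+1-1-i = m-i by omega, Nat.choose_symm (by omega),
    show m - (m - i) = i by omega]
  ring

private lemma stmt9_R2 (x : ℤ) (m : ℕ) :
    ∑ i ∈ range (m+1), (m.choose i : ℤ) * x^(m-i) = (x+1)^m := by
  rw [add_pow, ← Finset.sum_range_reflect]
  refine Finset.sum_congr rfl fun i hi => ?_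
  simp only [Finset.mem_range] at hi
  rw [show m+1-1-i = m-i by omega, Nat.choose_symm (by omega),
    show m - (m - i) = i by omega]
  ring

private lemma stmt9_L1 (x : ℤ) (m : ℕ) (hm : 1 ≤ m) :
    ∑ i ∈ Finset.Icc 1 m, (m.choose i : ℤ) * (-1)^(i+1) * x^(m-i)
      = x^m - (x-1)^m := by
  have hins : range (m+1) = insert 0 (Finset.Icc 1 m) := by
    ext j; simp [Finset.mem_range, Finset.mem_Icc]; omega
  have h := stmt9_R1 x m
  rw [hins, Finset.sum_insert (by simp)] at h
  simp only [Nat.choose_zero_right, pow_zero, Nat.sub_zero, Nat.cast_one] at h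
  have : ∑ i ∈ Finset.Icc 1 m, (m.choose i : ℤ) * (-1)^(i+1) * x^(m-i)
      = -∑ i ∈ Finset.Icc 1 m, (m.choose i : ℤ) * (-1)^i * x^(m-i) := by
    rw [← Finset.sum_neg_distrib]
    exact Finset.sum_congr rfl fun i _ => by ring
  rw [this]; linarith [h]

private lemma stmt9_L2 (x : ℤ) (m : ℕ) (hm : 1 ≤ m) :
    ∑ i ∈ Finset.Icc 1 m, (m.choose i : ℤ) * x^(m-i) = (x+1)^m - x^m := by
  have hins : range (m+1) = insert 0 (Finset.Icc 1 m) := by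
    ext j; simp [Finset.mem_range, Finset.mem_Icc]; omega
  have h := stmt9_R2 x m
  rw [hins, Finset.sum_insert (by simp)] at h
  simp only [Nat.choose_zero_right, Nat.cast_one, Nat.sub_zero, one_mul] at h
  linarith [h]

private lemma stmt9_key (m : ℕ) (hm : 1 ≤ m) : ∀ n : ℕ,
    ∑ r ∈ Finset.Icc 1 n, (-1:ℤ)^r * ((r:ℤ)-1)^m * (Nat.fib r : ℤ)
    + ∑ r ∈ Finset.Icc 1 (n-1), (-1:ℤ)^r * (r:ℤ)^m * (Nat.fib r : ℤ)
    - ∑ r ∈ Finset.Icc 1 (n-1), (-1:ℤ)^r * ((r:ℤ)+1)^m * (Nat.fib r : ℤ)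
    = (-1)^n * (n:ℤ)^m * ((Nat.fib (n+1) : ℤ) - (Nat.fib n : ℤ)) := by
  intro n
  induction n with
  | zero => simp [zero_pow (by omega : m ≠ 0)]
  | succ n ih =>
    rcases n with _ | k
    · simp [zero_pow (by omega : m ≠ 0)]
    · have e1 : ∑ r ∈ Finset.Icc 1 (k+2), (-1:ℤ)^r * ((r:ℤ)-1)^m * (Nat.fib r : ℤ)
          = ∑ r ∈ Finset.Icc 1 (k+1), (-1:ℤ)^r * ((r:ℤ)-1)^m * (Nat.fib r : ℤ)
            + (-1:ℤ)^(k+2) * (((k:ℤ)+2)-1)^m * (Nat.fib (k+2) : ℤ) := by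
        rw [Finset.sum_Icc_succ_top (by omega : (1:ℕ) ≤ k + 2)]; push_cast; ring
      have e2 : ∑ r ∈ Finset.Icc 1 (k+1), (-1:ℤ)^r * (r:ℤ)^m * (Nat.fib r : ℤ)
          = ∑ r ∈ Finset.Icc 1 k, (-1:ℤ)^r * (r:ℤ)^m * (Nat.fib r : ℤ)
            + (-1:ℤ)^(k+1) * ((k:ℤ)+1)^m * (Nat.fib (k+1) : ℤ) := by
        rw [Finset.sum_Icc_succ_top (by omega : (1:ℕ) ≤ k + 1)]; push_cast; ring
      have e3 : ∑ r ∈ Finset.Icc 1 (k+1), (-1:ℤ)^r * ((r:ℤ)+1)^m * (Nat.fib r : ℤ)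
          = ∑ r ∈ Finset.Icc 1 k, (-1:ℤ)^r * ((r:ℤ)+1)^m * (Nat.fib r : ℤ)
            + (-1:ℤ)^(k+1) * ((k:ℤ)+2)^m * (Nat.fib (k+1) : ℤ) := by
        rw [Finset.sum_Icc_succ_top (by omega : (1:ℕ) ≤ k + 1)]; push_cast; ring
      rw [show k + 1 + 1 - 1 = k + 1 from rfl] at *
      rw [show k + 1 - 1 = k from rfl] at ih
      have hfib : (Nat.fib (k+3) : ℤ) = Nat.fib (k+2) + Nat.fib (k+1) := by
        rw [Nat.fib_add_two]; push_cast; ring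
      rw [show k+1+1 = k+2 from rfl, e1, e2, e3]
      push_cast at ih ⊢
      linear_combination ih - ((-1:ℤ)^(k+2) * ((k:ℤ)+2)^m) * hfib

theorem stmt_9 (n m : ℕ) (hn : 1 ≤ n) (hm : 1 ≤ m) :
    ∑ r ∈ Finset.Icc 1 n, (-1 : ℤ) ^ r * (r : ℤ) ^ m * (Nat.fib r : ℤ) =
      ∑ i ∈ Finset.Icc 1 m, (m.choose i : ℤ) * (-1) ^ (i + 1) *
          ∑ r ∈ Finset.Icc 1 n, (-1 : ℤ) ^ r * (r : ℤ) ^ (m - i) * (Nat.fib r : ℤ)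
      + ∑ i ∈ Finset.Icc 1 m, (m.choose i : ℤ) *
          ∑ r ∈ Finset.Icc 1 (n - 1), (-1 : ℤ) ^ r * (r : ℤ) ^ (m - i) * (Nat.fib r : ℤ)
      - (n : ℤ) ^ m * ((-1) ^ (n + 1) * (Nat.fib (n + 1) : ℤ)
          + (-1) ^ (n + 2) * (Nat.fib n : ℤ)) := by
  have h1 : ∑ i ∈ Finset.Icc 1 m, (m.choose i : ℤ) * (-1) ^ (i + 1) *
          ∑ r ∈ Finset.Icc 1 n, (-1 : ℤ) ^ r * (r : ℤ) ^ (m - i) * (Nat.fib r : ℤ)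
      = ∑ r ∈ Finset.Icc 1 n, (-1:ℤ)^r * (Nat.fib r : ℤ) * ((r:ℤ)^m - ((r:ℤ)-1)^m) := by
    calc _ = ∑ i ∈ Finset.Icc 1 m, ∑ r ∈ Finset.Icc 1 n,
          (m.choose i : ℤ) * (-1) ^ (i + 1) *
            ((-1 : ℤ) ^ r * (r : ℤ) ^ (m - i) * (Nat.fib r : ℤ)) := by
            simp_rw [Finset.mul_sum]
      _ = ∑ r ∈ Finset.Icc 1 n, ∑ i ∈ Finset.Icc 1 m,
          (m.choose i : ℤ) * (-1) ^ (i + 1) *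
            ((-1 : ℤ) ^ r * (r : ℤ) ^ (m - i) * (Nat.fib r : ℤ)) := Finset.sum_comm
      _ = ∑ r ∈ Finset.Icc 1 n, (-1:ℤ)^r * (Nat.fib r : ℤ) * ((r:ℤ)^m - ((r:ℤ)-1)^m) := by
            refine Finset.sum_congr rfl fun r _ => ?_
            rw [← stmt9_L1 (r:ℤ) m hm, Finset.mul_sum]
            exact Finset.sum_congr rfl fun i _ => by ring
  have h2 : ∑ i ∈ Finset.Icc 1 m, (m.choose i : ℤ) *
          ∑ r ∈ Finset.Icc 1 (n-1), (-1 : ℤ) ^ r * (r : ℤ) ^ (m - i) * (Nat.fib r : ℤ)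
      = ∑ r ∈ Finset.Icc 1 (n-1), (-1:ℤ)^r * (Nat.fib r : ℤ) * (((r:ℤ)+1)^m - (r:ℤ)^m) := by
    calc _ = ∑ i ∈ Finset.Icc 1 m, ∑ r ∈ Finset.Icc 1 (n-1),
          (m.choose i : ℤ) *
            ((-1 : ℤ) ^ r * (r : ℤ) ^ (m - i) * (Nat.fib r : ℤ)) := by
            simp_rw [Finset.mul_sum]
      _ = ∑ r ∈ Finset.Icc 1 (n-1), ∑ i ∈ Finset.Icc 1 m,
          (m.choose i : ℤ) *
            ((-1 : ℤ) ^ r * (r : ℤ) ^ (m - i) * (Nat.fib r : ℤ)) := Finset.sum_comm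
      _ = ∑ r ∈ Finset.Icc 1 (n-1), (-1:ℤ)^r * (Nat.fib r : ℤ) * (((r:ℤ)+1)^m - (r:ℤ)^m) := by
            refine Finset.sum_congr rfl fun r _ => ?_
            rw [← stmt9_L2 (r:ℤ) m hm, Finset.mul_sum]
            exact Finset.sum_congr rfl fun i _ => by ring
  have s1 : ∑ r ∈ Finset.Icc 1 n, (-1:ℤ)^r * (Nat.fib r : ℤ) * ((r:ℤ)^m - ((r:ℤ)-1)^m)
      = ∑ r ∈ Finset.Icc 1 n, (-1:ℤ)^r * (r:ℤ)^m * (Nat.fib r : ℤ)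
        - ∑ r ∈ Finset.Icc 1 n, (-1:ℤ)^r * ((r:ℤ)-1)^m * (Nat.fib r : ℤ) := by
    rw [← Finset.sum_sub_distrib]
    exact Finset.sum_congr rfl fun r _ => by ring
  have s2 : ∑ r ∈ Finset.Icc 1 (n-1), (-1:ℤ)^r * (Nat.fib r : ℤ) * (((r:ℤ)+1)^m - (r:ℤ)^m)
      = ∑ r ∈ Finset.Icc 1 (n-1), (-1:ℤ)^r * ((r:ℤ)+1)^m * (Nat.fib r : ℤ)
        - ∑ r ∈ Finset.Icc 1 (n-1), (-1:ℤ)^r * (r:ℤ)^m * (Nat.fib r : ℤ) := by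
    rw [← Finset.sum_sub_distrib]
    exact Finset.sum_congr rfl fun r _ => by ring
  rw [h1, h2, s1, s2]
  linear_combination stmt9_key m hm n
end

section
/- For every integer m ≥ 1 and every real x with |x| < 1/φ, where φ = (1+√5)/2, the following recurrence holds between convergent series: ∑_{r=1}^{∞} r^m F_r x^r = (1/(1 - x - x²)) ∑_{i=1}^{m} C(m,i) (-1)^{i+1} ∑_{r=1}^{∞} r^{m-i} F_r x^r + (x²/(1 - x - x²)) ∑_{i=1}^{m} C(m,i) ∑_{r=1}^{∞} r^{m-i} F_r x^r. -/
open Finset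

private lemma fib_le_phi : ∀ n : ℕ, (Nat.fib n : ℝ) ≤ ((1 + Real.sqrt 5)/2) ^ n := by
  have hs : Real.sqrt 5 ^ 2 = 5 := Real.sq_sqrt (by norm_num)
  have h5 : (1:ℝ) ≤ Real.sqrt 5 := by nlinarith [Real.sqrt_nonneg 5]
  have hphi1 : (1:ℝ) ≤ (1 + Real.sqrt 5)/2 := by linarith
  have hsq : ((1 + Real.sqrt 5)/2)^2 = (1 + Real.sqrt 5)/2 + 1 := by nlinarith
  intro n
  induction n using Nat.twoStepInduction with
  | zero => simp
  | one => simpa using hphi1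
  | more n ih1 ih2 =>
    have hkey : ((1 + Real.sqrt 5)/2)^(n+2) = ((1 + Real.sqrt 5)/2)^(n+1) + ((1 + Real.sqrt 5)/2)^n := by
      have : ((1 + Real.sqrt 5)/2)^(n+2) = ((1 + Real.sqrt 5)/2)^n * ((1 + Real.sqrt 5)/2)^2 := by ring
      rw [this, hsq]; ring
    rw [Nat.fib_add_two, hkey]
    push_cast
    linarith

private lemma summable_aux (j : ℕ) (x : ℝ) (hx : |x| < 1 / ((1 + Real.sqrt 5) / 2)) :
    Summable (fun r : ℕ => (r:ℝ)^j * (Nat.fib r : ℝ) * x^r) := by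
  have hs : Real.sqrt 5 ^ 2 = 5 := Real.sq_sqrt (by norm_num)
  have hφ : (0:ℝ) < (1 + Real.sqrt 5)/2 := by nlinarith [Real.sqrt_nonneg 5]
  have hr : ‖((1 + Real.sqrt 5)/2) * |x|‖ < 1 := by
    rw [Real.norm_eq_abs, abs_of_nonneg (by positivity)]
    calc ((1 + Real.sqrt 5)/2) * |x| < ((1 + Real.sqrt 5)/2) * (1/((1 + Real.sqrt 5)/2)) :=
          mul_lt_mul_of_pos_left hx hφ
    _ = 1 := by field_simp
  have hg : Summable (fun r : ℕ => (r:ℝ)^j * (((1 + Real.sqrt 5)/2) * |x|)^r) :=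
    summable_pow_mul_geometric_of_norm_lt_one j hr
  apply Summable.of_norm_bounded hg
  intro r
  rw [Real.norm_eq_abs, abs_mul, abs_mul, abs_pow, abs_pow]
  rw [Nat.abs_cast, Nat.abs_cast, mul_pow]
  have h1 : (Nat.fib r : ℝ) ≤ ((1 + Real.sqrt 5)/2)^r := fib_le_phi r
  have h2 : (0:ℝ) ≤ (r:ℝ)^j := by positivity
  calc (r:ℝ)^j * (Nat.fib r : ℝ) * |x|^r ≤ (r:ℝ)^j * (((1 + Real.sqrt 5)/2)^r) * |x|^r := by
        apply mul_le_mul_of_nonneg_right (mul_le_mul_of_nonneg_left h1 h2) (by positivity)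
  _ = (r:ℝ)^j * (((1 + Real.sqrt 5)/2)^r * |x|^r) := by ring

private lemma binom (c r : ℝ) (m : ℕ) :
    (r + c)^m = ∑ i ∈ range (m+1), (m.choose i : ℝ) * c^i * r^(m-i) := by
  rw [add_comm, add_pow]
  exact sum_congr rfl fun i _ => by ring

private lemma summable_shift (j : ℕ) (c x : ℝ) (hx : |x| < 1 / ((1 + Real.sqrt 5) / 2)) :
    Summable (fun r : ℕ => ((r:ℝ)+c)^j * (Nat.fib r : ℝ) * x^r) := by
  have h : ∀ r : ℕ, ((r:ℝ)+c)^j * (Nat.fib r : ℝ) * x^r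
      = ∑ i ∈ range (j+1), ((j.choose i : ℝ) * c^i) * ((r:ℝ)^(j-i) * (Nat.fib r:ℝ) * x^r) := by
    intro r
    rw [binom c (r:ℝ) j, Finset.sum_mul, Finset.sum_mul]
    exact sum_congr rfl fun i _ => by ring
  exact (summable_sum fun i _ => (summable_aux (j-i) x hx).mul_left _).congr
    (fun r => (h r).symm)


theorem stmt_13 (m : ℕ) (hm : 1 ≤ m) (x : ℝ)
    (hx : |x| < 1 / ((1 + Real.sqrt 5) / 2)) :
    ∑' r : ℕ, (r : ℝ) ^ m * (Nat.fib r : ℝ) * x ^ r =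
      (1 / (1 - x - x ^ 2)) *
        ∑ i ∈ Finset.Icc 1 m, (m.choose i : ℝ) * (-1) ^ (i + 1) *
          ∑' r : ℕ, (r : ℝ) ^ (m - i) * (Nat.fib r : ℝ) * x ^ r
      + (x ^ 2 / (1 - x - x ^ 2)) *
        ∑ i ∈ Finset.Icc 1 m, (m.choose i : ℝ) *
          ∑' r : ℕ, (r : ℝ) ^ (m - i) * (Nat.fib r : ℝ) * x ^ r := by
  have hS : ∀ j : ℕ, Summable (fun r : ℕ => (r:ℝ)^j * (Nat.fib r : ℝ) * x^r) :=
    fun j => summable_aux j x hx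
  have hs : Real.sqrt 5 ^ 2 = 5 := Real.sq_sqrt (by norm_num)
  have hs1 : (1:ℝ) ≤ Real.sqrt 5 := by nlinarith [Real.sqrt_nonneg 5]
  have hinv : 1 / ((1 + Real.sqrt 5)/2) = (Real.sqrt 5 - 1)/2 := by
    field_simp
    nlinarith
  have hxu : x < (Real.sqrt 5 - 1)/2 := by rw [hinv] at hx; exact (abs_lt.mp hx).2
  have hxl : -((Real.sqrt 5 - 1)/2) < x := by rw [hinv] at hx; exact (abs_lt.mp hx).1
  have hd : (0:ℝ) < 1 - x - x^2 := by
    nlinarith [mul_pos (sub_pos.mpr hxu)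
      (show (0:ℝ) < (Real.sqrt 5 + 1)/2 + x by linarith)]
  set A := ∑ i ∈ Finset.Icc 1 m, (m.choose i : ℝ) * (-1) ^ (i + 1) *
      ∑' r : ℕ, (r : ℝ) ^ (m - i) * (Nat.fib r : ℝ) * x ^ r with hA
  set B := ∑ i ∈ Finset.Icc 1 m, (m.choose i : ℝ) *
      ∑' r : ℕ, (r : ℝ) ^ (m - i) * (Nat.fib r : ℝ) * x ^ r with hB
  set Sm := ∑' r : ℕ, (r : ℝ) ^ m * (Nat.fib r : ℝ) * x ^ r with hSm
  have hTs : Summable (fun r : ℕ => ((r:ℝ)+(-1))^m * (Nat.fib r:ℝ) * x^r) :=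
    summable_shift m (-1) x hx
  have hUs : Summable (fun r : ℕ => ((r:ℝ)+1)^m * (Nat.fib r:ℝ) * x^r) :=
    summable_shift m 1 x hx
  set T := ∑' r : ℕ, ((r:ℝ)+(-1))^m * (Nat.fib r:ℝ) * x^r with hT
  set U := ∑' r : ℕ, ((r:ℝ)+1)^m * (Nat.fib r:ℝ) * x^r with hU
  -- binomial expansion of shifted sums
  have expand : ∀ c : ℝ, (∑' r : ℕ, ((r:ℝ)+c)^m * (Nat.fib r:ℝ) * x^r)
      = ∑ i ∈ range (m+1), (m.choose i : ℝ) * c^i *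
          ∑' r : ℕ, (r:ℝ)^(m-i) * (Nat.fib r:ℝ) * x^r := by
    intro c
    have h1 : (fun r : ℕ => ((r:ℝ)+c)^m * (Nat.fib r:ℝ) * x^r)
        = fun r : ℕ => ∑ i ∈ range (m+1),
            ((m.choose i : ℝ) * c^i) * ((r:ℝ)^(m-i) * (Nat.fib r:ℝ) * x^r) := by
      funext r
      rw [binom c (r:ℝ) m, Finset.sum_mul, Finset.sum_mul]
      exact sum_congr rfl fun i _ => by ring
    rw [h1, Summable.tsum_finsetSum (fun i _ => (hS (m-i)).mul_left _)]
    exact sum_congr rfl fun i _ => by rw [tsum_mul_left, mul_assoc]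
  have split : ∀ f : ℕ → ℝ, ∑ i ∈ range (m+1), f i = f 0 + ∑ i ∈ Finset.Icc 1 m, f i := by
    intro f
    rw [Finset.sum_range_succ' f m,
      show Finset.Icc 1 m = Finset.Ico 1 (m+1) from (Finset.Ico_add_one_right_eq_Icc 1 m).symm,
      Finset.sum_Ico_eq_sum_range, Nat.add_sub_cancel, add_comm]
    congr 1
    exact sum_congr rfl fun i _ => by rw [add_comm]
  have hTe : T = Sm - A := by
    rw [hT, expand (-1), split]
    simp only [pow_zero, Nat.choose_zero_right, Nat.cast_one, one_mul, Nat.sub_zero]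
    rw [← hSm, sub_eq_add_neg]
    congr 1
    rw [hA, ← Finset.sum_neg_distrib]
    exact sum_congr rfl fun i _ => by rw [pow_succ]; ring
  have hUe : U = Sm + B := by
    rw [hU, expand 1, split]
    simp only [pow_zero, Nat.choose_zero_right, Nat.cast_one, one_mul, Nat.sub_zero,
      one_pow, mul_one]
    rfl
  -- shifting the index
  have hshift1 : Sm = ∑' r : ℕ, ((r:ℝ)+1)^m * (Nat.fib (r+1):ℝ) * x^(r+1) := by
    rw [hSm, Summable.tsum_eq_zero_add (hS m)]
    rw [show ((0:ℕ):ℝ)^m * (Nat.fib 0:ℝ) * x^0 = 0 by simp, zero_add]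
    exact tsum_congr fun r => by push_cast; ring
  have hm0 : m ≠ 0 := by omega
  have hTshift : T = ∑' r : ℕ, ((r:ℝ)+1)^m * (Nat.fib (r+2):ℝ) * x^(r+2) := by
    rw [hT, Summable.tsum_eq_zero_add hTs, Summable.tsum_eq_zero_add ((summable_nat_add_iff 1).mpr hTs)]
    rw [show (((0:ℕ):ℝ)+(-1))^m * (Nat.fib 0:ℝ) * x^0 = 0 by simp]
    rw [show (((0+1:ℕ):ℝ)+(-1))^m * (Nat.fib (0+1):ℝ) * x^(0+1) = 0 by
      push_cast; simp [zero_pow hm0]]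
    rw [zero_add, zero_add]
    exact tsum_congr fun r => by push_cast; try ring_nf
  have hsum1 : Summable (fun r : ℕ => ((r:ℝ)+1)^m * (Nat.fib (r+1):ℝ) * x^(r+1)) := by
    have h := (summable_nat_add_iff
      (f := fun r : ℕ => (r:ℝ)^m * (Nat.fib r:ℝ) * x^r) 1).mpr (hS m)
    exact h.congr fun r => by push_cast; ring
  have hstep : T = x * Sm + x^2 * U := by
    calc T = ∑' r : ℕ, ((r:ℝ)+1)^m * (Nat.fib (r+2):ℝ) * x^(r+2) := hTshift
    _ = ∑' r : ℕ, (x * (((r:ℝ)+1)^m * (Nat.fib (r+1):ℝ) * x^(r+1))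
          + x^2 * (((r:ℝ)+1)^m * (Nat.fib r:ℝ) * x^r)) :=
        tsum_congr fun r => by rw [Nat.fib_add_two]; push_cast; ring
    _ = (∑' r : ℕ, x * (((r:ℝ)+1)^m * (Nat.fib (r+1):ℝ) * x^(r+1)))
          + ∑' r : ℕ, x^2 * (((r:ℝ)+1)^m * (Nat.fib r:ℝ) * x^r) :=
        Summable.tsum_add (hsum1.mul_left x) (hUs.mul_left (x^2))
    _ = x * (∑' r : ℕ, ((r:ℝ)+1)^m * (Nat.fib (r+1):ℝ) * x^(r+1)) + x^2 * U := by
        rw [tsum_mul_left, tsum_mul_left, hU]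
    _ = x * Sm + x^2 * U := by rw [← hshift1]
  rw [hTe, hUe] at hstep
  have hdne : (1 - x - x^2) ≠ 0 := ne_of_gt hd
  have goal2 : Sm = (A + x^2*B) / (1 - x - x^2) := by
    rw [eq_div_iff hdne]; linear_combination hstep
  rw [goal2]; ring
end

section
/- The series ∑_{r=1}^{∞} r F_r / 3^r converges and its sum equals 6/5. -/
open Real goldenRatio

theorem stmt_14 :
    HasSum (fun r : ℕ => (r : ℝ) * (Nat.fib r : ℝ) / 3 ^ r) (6 / 5) := by
  have h5 : (0:ℝ) < √5 := Real.sqrt_pos.mpr (by norm_num)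
  have hs5 : √5 ^ 2 = 5 := Real.sq_sqrt (by norm_num)
  have hs5lt : √5 < 3 := by nlinarith
  have hφ : ‖φ / 3‖ < 1 := by
    rw [Real.norm_eq_abs, abs_of_pos (by positivity)]
    rw [goldenRatio, div_lt_one (by norm_num)]; linarith
  have hψ : ‖ψ / 3‖ < 1 := by
    rw [Real.norm_eq_abs, abs_lt]
    constructor <;> rw [goldenConj] <;> nlinarith
  have h1 := hasSum_coe_mul_geometric_of_norm_lt_one hφ
  have h2 := hasSum_coe_mul_geometric_of_norm_lt_one hψ
  have h3 := (h1.sub h2).div_const (√5)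
  have hkey : ∀ r : ℕ, (r : ℝ) * (Nat.fib r : ℝ) / 3 ^ r
      = ((r : ℝ) * (φ / 3) ^ r - (r : ℝ) * (ψ / 3) ^ r) / √5 := by
    intro r
    have h6 : (6:ℝ) ^ r = 2 ^ r * 3 ^ r := by rw [← mul_pow]; norm_num
    rw [Real.coe_fib_eq]
    field_simp
    rw [show ((1 + √5) / (2 * 3)) = φ / 3 by rw [goldenRatio]; ring,
      show ((1 - √5) / (2 * 3)) = ψ / 3 by rw [goldenConj]; ring, div_pow, div_pow]
    rw [goldenRatio, goldenConj, div_div, div_div, div_pow, div_pow, mul_pow]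
    field_simp
  have hval : (φ / 3 / (1 - φ / 3) ^ 2 - ψ / 3 / (1 - ψ / 3) ^ 2) / √5 = 6 / 5 := by
    rw [goldenRatio, goldenConj,
        show 1 - (1 + √5) / 2 / 3 = (5 - √5) / 6 by ring,
        show 1 - (1 - √5) / 2 / 3 = (5 + √5) / 6 by ring]
    have hd1 : (5:ℝ) - √5 ≠ 0 := by nlinarith
    have hd2 : (5:ℝ) + √5 ≠ 0 := by positivity
    field_simp
    linear_combination (-6*√5^3 + 330*√5) * hs5
  rw [← hval]
  exact h3.congr_fun hkey
end
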